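/- The class K has the joint embedding property: for all D₁, D₂ ∈ K there exist E ∈ K and embeddings of D₁ and D₂ into E. -/

import Mathlib

universe u

open FirstOrder FirstOrder.Language FirstOrder.Language.Structure CategoryTheory

namespace Ivanov

/-- The relation symbols of the finite language `L`:
four unary symbols `P`, `Q`, `λ`, `ρ`, a binary `H` and a 4-ary `S`. -/
inductive LRel : ℕ → Type
  | P : LRel 1
  | Q : LRel 1
  | lam : LRel 1
  | rho : LRel 1
  | H : LRel 2
  | S : LRel 4

/-- The finite language `L`. -/
def L : Language := ⟨fun _ => Empty, LRel⟩

/-- The relational language having a relation symbol `Rₙ` of arity `ar n` for each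
index `n ∈ s` with `0 < n`. -/
def L0r (ar : ℕ → ℕ) (s : Set ℕ) : Language :=
  ⟨fun _ => Empty, fun k => {n : ℕ // 0 < n ∧ n ∈ s ∧ ar n = k}⟩

/-- The relation symbol `Rₙ`. -/
def R (ar : ℕ → ℕ) (s : Set ℕ) (n : ℕ) (h1 : 0 < n) (h2 : n ∈ s) :
    (L0r ar s).Relations (ar n) := ⟨n, h1, h2, rfl⟩

/-- The language `L ∪ L₀`. -/
def LFull (ar : ℕ → ℕ) (s : Set ℕ) : Language := L.sum (L0r ar s)

instance (ar : ℕ → ℕ) (s : Set ℕ) (n : ℕ) : IsEmpty ((LFull ar s).Functions n) :=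
  ⟨fun f => Sum.elim Empty.elim Empty.elim f⟩

instance (ar : ℕ → ℕ) (s : Set ℕ) (n : ℕ) : IsEmpty ((L0r ar s).Functions n) :=
  ⟨fun f => Empty.elim f⟩

section

variable (ar : ℕ → ℕ) (s : Set ℕ) {M : Type u} [(LFull ar s).Structure M]

/-- `x` satisfies the unary predicate `P`. -/
def isP (x : M) : Prop := RelMap (L := LFull ar s) (n := 1) (Sum.inl LRel.P) ![x]

/-- `x` satisfies the unary predicate `Q`. -/
def isQ (x : M) : Prop := RelMap (L := LFull ar s) (n := 1) (Sum.inl LRel.Q) ![x]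

/-- `x` satisfies the unary predicate `λ`. -/
def isLam (x : M) : Prop := RelMap (L := LFull ar s) (n := 1) (Sum.inl LRel.lam) ![x]

/-- `x` satisfies the unary predicate `ρ`. -/
def isRho (x : M) : Prop := RelMap (L := LFull ar s) (n := 1) (Sum.inl LRel.rho) ![x]

/-- the binary predicate `H`. -/
def isH (x y : M) : Prop := RelMap (L := LFull ar s) (n := 2) (Sum.inl LRel.H) ![x, y]

/-- the 4-ary predicate `S`. -/
def isS (x y z w : M) : Prop := RelMap (L := LFull ar s) (n := 4) (Sum.inl LRel.S) ![x, y, z, w]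

/-- The basic conditions on the `(L ∪ L₀)`-structures under consideration: `P` and `Q`
partition the universe, `λ`, `ρ`, `H` hold only on `Q`, the `Rₙ` hold only on tuples from `P`,
and `S(a,b,c,d)` implies `a, c ∈ P`, `b, d ∈ Q`. -/
structure IsGood (M : Type u) [(LFull ar s).Structure M] : Prop where
  part : ∀ x : M, isP ar s x ∨ isQ ar s x
  not_both : ∀ x : M, ¬(isP ar s x ∧ isQ ar s x)
  lam_q : ∀ x : M, isLam ar s x → isQ ar s x
  rho_q : ∀ x : M, isRho ar s x → isQ ar s x
  h_q : ∀ x y : M, isH ar s x y → isQ ar s x ∧ isQ ar s y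
  r_p : ∀ (k : ℕ) (r : (L0r ar s).Relations k) (t : Fin k → M),
    RelMap (L := LFull ar s) (n := k) (Sum.inr r) t → ∀ i, isP ar s (t i)
  s_pq : ∀ x y z w : M, isS ar s x y z w →
    isP ar s x ∧ isQ ar s y ∧ isP ar s z ∧ isQ ar s w

/-- `(a, c)` is an `n`-pair of arity `m` (labelling the tuple `a`). -/
structure IsNPair {M : Type u} [(LFull ar s).Structure M] (n m : ℕ)
    (a : Fin m → M) (c : Fin n → M) : Prop where
  le : m ≤ n
  aP : ∀ i, isP ar s (a i)
  cQ : ∀ j, isQ ar s (c j)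
  inj : Function.Injective c
  hH : ∀ i j : Fin n, isH ar s (c i) (c j) ↔ (j : ℕ) = ((i : ℕ) + 1) % n
  hlam : ∀ i : Fin n, isLam ar s (c i) ↔ (i : ℕ) = 0
  hrho : ∀ i : Fin n, isRho ar s (c i) ↔ (i : ℕ) = m - 1
  hS : ∀ (i k : Fin m) (j l : Fin n),
    isS ar s (a i) (c j) (a k) (c l) ↔ a i = a k

/-- The induced structure on a subset of a structure in a relational language. -/
def inducedStr (A : Set M) : (LFull ar s).Structure A where
  funMap := fun {_} f _ => isEmptyElim f
  RelMap := fun {_} r t => RelMap r fun i => (t i : M)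

end

/-- The `P`-part of a structure. -/
abbrev Ppart (ar : ℕ → ℕ) (s : Set ℕ) (M : Type u) [(LFull ar s).Structure M] : Type u :=
  {x : M // isP ar s x}

/-- The `L₀`-structure induced on the `P`-part by the relations `Rₙ`. -/
instance PpartStr (ar : ℕ → ℕ) (s : Set ℕ) (M : Type u) [(LFull ar s).Structure M] :
    (L0r ar s).Structure (Ppart ar s M) where
  funMap := fun {_} f _ => isEmptyElim f
  RelMap := fun {_} r t => RelMap (L := LFull ar s) (Sum.inr r) fun i => (t i : M)

/-- The class `K` of all finite `(L ∪ L₀)`-structures `D` satisfying the basic conditions,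
whose `P`-part is isomorphic to a substructure of `M₀`, and in which, for every `n`, every
`n`-pair whose arity equals the arity of `Rₙ` labels a tuple satisfying `Rₙ`. -/
def Kclass (ar : ℕ → ℕ) (s : Set ℕ) (M₀ : Type u) [(L0r ar s).Structure M₀] :
    Set (Bundled.{u} (LFull ar s).Structure) :=
  {D | Finite D ∧ IsGood ar s D ∧
    Nonempty (Ppart ar s D ↪[L0r ar s] M₀) ∧
    ∀ (n : ℕ) (h1 : 0 < n) (h2 : n ∈ s) (a : Fin (ar n) → D) (c : Fin n → D),
      IsNPair ar s n (ar n) a c →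
        RelMap (L := LFull ar s) (n := ar n) (Sum.inr (R ar s n h1 h2)) a}

section Construction

variable (ar : ℕ → ℕ) (s : Set ℕ) (M₀ : Type u) [(L0r ar s).Structure M₀]
variable (D : Bool → Type u) [inst : ∀ i, (LFull ar s).Structure (D i)]
variable (f : ∀ i, Ppart ar s (D i) ↪[L0r ar s] M₀)

/-- The Q-part of a structure. -/
abbrev Qpart (M : Type u) [(LFull ar s).Structure M] : Type u := {x : M // isQ ar s x}

/-- The subset of `M₀` serving as the `P`-part of the joint structure. -/
def PEset : Set M₀ := ⋃ i, Set.range (f i)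

/-- The carrier of the joint structure. -/
def ECar : Type u := ↥(PEset ar s M₀ D f) ⊕ (Σ i, Qpart ar s (D i))

variable {ar s M₀ D f} in
/-- Projection to `M₀`. -/
def toM : ECar ar s M₀ D f → Option M₀
  | Sum.inl p => some p.val
  | Sum.inr _ => none

variable {ar s M₀ D f} in
def lamE (x : ECar ar s M₀ D f) : Prop :=
  ∃ (i : Bool) (q : Qpart ar s (D i)), x = Sum.inr ⟨i, q⟩ ∧ isLam ar s (q : D i)

variable {ar s M₀ D f} in
def rhoE (x : ECar ar s M₀ D f) : Prop :=
  ∃ (i : Bool) (q : Qpart ar s (D i)), x = Sum.inr ⟨i, q⟩ ∧ isRho ar s (q : D i)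

variable {ar s M₀ D f} in
def hE (x y : ECar ar s M₀ D f) : Prop :=
  ∃ (i : Bool) (q q' : Qpart ar s (D i)), x = Sum.inr ⟨i, q⟩ ∧ y = Sum.inr ⟨i, q'⟩ ∧
    isH ar s (q : D i) (q' : D i)

variable {ar s M₀ D f} in
def sE (x y z w : ECar ar s M₀ D f) : Prop :=
  ∃ (i : Bool) (u u' : Ppart ar s (D i)) (q q' : Qpart ar s (D i))
    (p p' : ↥(PEset ar s M₀ D f)),
    x = Sum.inl p ∧ p.val = f i u ∧ y = Sum.inr ⟨i, q⟩ ∧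
    z = Sum.inl p' ∧ p'.val = f i u' ∧ w = Sum.inr ⟨i, q'⟩ ∧
    isS ar s (u : D i) (q : D i) (u' : D i) (q' : D i)

/-- The `(L ∪ L₀)`-structure on the joint carrier. -/
instance Estr : (LFull ar s).Structure (ECar ar s M₀ D f) where
  funMap := fun {_} F _ => isEmptyElim F
  RelMap := fun {k} r =>
    match k, r with
    | _, Sum.inl LRel.P => fun t => ∃ p, t 0 = Sum.inl p
    | _, Sum.inl LRel.Q => fun t => ∃ q, t 0 = Sum.inr q
    | _, Sum.inl LRel.lam => fun t => lamE (t 0)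
    | _, Sum.inl LRel.rho => fun t => rhoE (t 0)
    | _, Sum.inl LRel.H => fun t => hE (t 0) (t 1)
    | _, Sum.inl LRel.S => fun t => sE (t 0) (t 1) (t 2) (t 3)
    | k, Sum.inr r => fun t => ∃ t' : Fin k → M₀,
        (∀ j, toM (t j) = some (t' j)) ∧ RelMap r t'

variable {ar s M₀ D f}

lemma isP_E (x : ECar ar s M₀ D f) : isP ar s x ↔ ∃ p, x = Sum.inl p := Iff.rfl
lemma isQ_E (x : ECar ar s M₀ D f) : isQ ar s x ↔ ∃ q, x = Sum.inr q := Iff.rfl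
lemma isLam_E (x : ECar ar s M₀ D f) : isLam ar s x ↔ lamE x := Iff.rfl
lemma isRho_E (x : ECar ar s M₀ D f) : isRho ar s x ↔ rhoE x := Iff.rfl
lemma isH_E (x y : ECar ar s M₀ D f) : isH ar s x y ↔ hE x y := Iff.rfl
lemma isS_E (x y z w : ECar ar s M₀ D f) : isS ar s x y z w ↔ sE x y z w := Iff.rfl
lemma relE {k : ℕ} (r : (L0r ar s).Relations k) (t : Fin k → ECar ar s M₀ D f) :
    RelMap (L := LFull ar s) (Sum.inr r) t ↔
      ∃ t' : Fin k → M₀, (∀ j, toM (t j) = some (t' j)) ∧ RelMap r t' := Iff.rfl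

end Construction
section Construction2

variable {ar : ℕ → ℕ} {s : Set ℕ} {M₀ : Type u} [(L0r ar s).Structure M₀]
variable {D : Bool → Type u} [inst : ∀ i, (LFull ar s).Structure (D i)]
variable {f : ∀ i, Ppart ar s (D i) ↪[L0r ar s] M₀}

lemma hE_mk {i : Bool} (q q' : Qpart ar s (D i)) :
    hE (f := f) (Sum.inr ⟨i, q⟩) (Sum.inr ⟨i, q'⟩) ↔ isH ar s (q : D i) (q' : D i) := by
  constructor
  · rintro ⟨i', r, r', h1, h2, h3⟩
    injection h1 with h1
    injection h2 with h2
    obtain ⟨rfl, h1⟩ := Sigma.mk.inj_iff.mp h1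
    obtain ⟨-, h2⟩ := Sigma.mk.inj_iff.mp h2
    rw [heq_eq_eq] at h1 h2
    subst h1; subst h2; exact h3
  · intro h; exact ⟨i, q, q', rfl, rfl, h⟩

lemma lamE_mk {i : Bool} (q : Qpart ar s (D i)) :
    lamE (f := f) (Sum.inr ⟨i, q⟩) ↔ isLam ar s (q : D i) := by
  constructor
  · rintro ⟨i', r, h1, h2⟩
    injection h1 with h1
    obtain ⟨rfl, h1⟩ := Sigma.mk.inj_iff.mp h1
    rw [heq_eq_eq] at h1
    subst h1; exact h2
  · intro h; exact ⟨i, q, rfl, h⟩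

lemma rhoE_mk {i : Bool} (q : Qpart ar s (D i)) :
    rhoE (f := f) (Sum.inr ⟨i, q⟩) ↔ isRho ar s (q : D i) := by
  constructor
  · rintro ⟨i', r, h1, h2⟩
    injection h1 with h1
    obtain ⟨rfl, h1⟩ := Sigma.mk.inj_iff.mp h1
    rw [heq_eq_eq] at h1
    subst h1; exact h2
  · intro h; exact ⟨i, q, rfl, h⟩

lemma sE_mk {i : Bool} (u u' : Ppart ar s (D i)) (q q' : Qpart ar s (D i))
    (p p' : ↥(PEset ar s M₀ D f)) (hp : p.val = f i u) (hp' : p'.val = f i u') :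
    sE (Sum.inl p) (Sum.inr ⟨i, q⟩) (Sum.inl p') (Sum.inr ⟨i, q'⟩) ↔
      isS ar s (u : D i) (q : D i) (u' : D i) (q' : D i) := by
  constructor
  · rintro ⟨i', v, v', r, r', pp, pp', h1, h2, h3, h4, h5, h6, h7⟩
    injection h1 with h1
    injection h3 with h3
    injection h4 with h4
    injection h6 with h6
    obtain ⟨rfl, h3⟩ := Sigma.mk.inj_iff.mp h3
    rw [heq_eq_eq] at h3
    obtain ⟨-, h6⟩ := Sigma.mk.inj_iff.mp h6
    rw [heq_eq_eq] at h6
    subst h1; subst h4; subst h3; subst h6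
    rw [hp] at h2
    rw [hp'] at h5
    have hv : u = v := (f i).injective h2
    have hv' : u' = v' := (f i).injective h5
    subst hv; subst hv'; exact h7
  · intro h
    exact ⟨i, u, u', q, q', p, p', rfl, hp, rfl, rfl, hp', rfl, h⟩

lemma goodE : IsGood ar s (ECar ar s M₀ D f) where
  part := fun x => by
    cases x with
    | inl p => exact Or.inl ⟨p, rfl⟩
    | inr q => exact Or.inr ⟨q, rfl⟩
  not_both := fun x => by
    rintro ⟨⟨p, hp⟩, ⟨q, hq⟩⟩
    rw [hp] at hq; exact nomatch hq
  lam_q := fun x hx => by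
    obtain ⟨i, q, rfl, -⟩ := hx
    exact ⟨_, rfl⟩
  rho_q := fun x hx => by
    obtain ⟨i, q, rfl, -⟩ := hx
    exact ⟨_, rfl⟩
  h_q := fun x y hxy => by
    obtain ⟨i, q, q', rfl, rfl, -⟩ := hxy
    exact ⟨⟨_, rfl⟩, ⟨_, rfl⟩⟩
  r_p := fun k r t hr j => by
    obtain ⟨t', ht', -⟩ := hr
    have := ht' j
    cases htj : t j with
    | inl p => exact ⟨p, rfl⟩
    | inr q => rw [htj] at this; exact absurd this (by simp [toM])
  s_pq := fun x y z w hx => by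
    obtain ⟨i, u, u', q, q', p, p', rfl, -, rfl, rfl, -, rfl, -⟩ := hx
    exact ⟨⟨p, rfl⟩, ⟨_, rfl⟩, ⟨p', rfl⟩, ⟨_, rfl⟩⟩

lemma finiteE [∀ i, Finite (D i)] : Finite (ECar ar s M₀ D f) := by
  have : (PEset ar s M₀ D f).Finite :=
    Set.finite_iUnion (fun i => Set.finite_range _)
  have := this.to_subtype
  unfold ECar
  infer_instance

/-- The embedding of the `P`-part of the joint structure into `M₀`. -/
noncomputable def pEmb : Ppart ar s (ECar ar s M₀ D f) ↪[L0r ar s] M₀ where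
  toFun := fun x => ((Classical.choose ((isP_E (x : ECar ar s M₀ D f)).mp x.2) :
      ↥(PEset ar s M₀ D f)) : M₀)
  inj' := by
    intro x y hxy
    have hx := Classical.choose_spec ((isP_E (x : ECar ar s M₀ D f)).mp x.2)
    have hy := Classical.choose_spec ((isP_E (y : ECar ar s M₀ D f)).mp y.2)
    apply Subtype.ext
    rw [hx, hy, Subtype.ext hxy]
  map_fun' := fun {n} F _ => isEmptyElim F
  map_rel' := by
    intro k r t
    set g : Ppart ar s (ECar ar s M₀ D f) → M₀ :=
      fun x => ((Classical.choose ((isP_E (x : ECar ar s M₀ D f)).mp x.2) :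
        ↥(PEset ar s M₀ D f)) : M₀) with hg
    have spec : ∀ x : Ppart ar s (ECar ar s M₀ D f),
        (x : ECar ar s M₀ D f) = Sum.inl (Classical.choose ((isP_E _).mp x.2)) :=
      fun x => Classical.choose_spec ((isP_E _).mp x.2)
    have key : ∀ x : Ppart ar s (ECar ar s M₀ D f),
        toM (f := f) (x : ECar ar s M₀ D f) = some (g x) := by
      intro x
      rw [spec x]; rfl
    show RelMap r (fun j => g (t j)) ↔
      RelMap (L := LFull ar s) (Sum.inr r) (fun j => ((t j) : ECar ar s M₀ D f))
    rw [relE]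
    constructor
    · intro hr
      exact ⟨fun j => g (t j), fun j => key (t j), hr⟩
    · rintro ⟨t', ht', hrel⟩
      have : ∀ j, g (t j) = t' j :=
        fun j => Option.some.inj ((key (t j)).symm.trans (ht' j))
      rwa [funext this]

end Construction2
section Construction3

variable {ar : ℕ → ℕ} {s : Set ℕ} {M₀ : Type u} [(L0r ar s).Structure M₀]
variable {D : Bool → Type u} [inst : ∀ i, (LFull ar s).Structure (D i)]
variable {f : ∀ i, Ppart ar s (D i) ↪[L0r ar s] M₀}

open Classical in
/-- The map from `D i` into the joint structure. -/
noncomputable def eMap (i : Bool) (good : IsGood ar s (D i)) (x : D i) : ECar ar s M₀ D f :=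
  if h : isP ar s x then
    Sum.inl ⟨f i ⟨x, h⟩, Set.mem_iUnion_of_mem i (Set.mem_range_self _)⟩
  else Sum.inr ⟨i, ⟨x, (good.part x).resolve_left h⟩⟩

lemma eMap_P {i : Bool} {good : IsGood ar s (D i)} {x : D i} (h : isP ar s x) :
    eMap (f := f) i good x =
      Sum.inl ⟨f i ⟨x, h⟩, Set.mem_iUnion_of_mem i (Set.mem_range_self _)⟩ := dif_pos h

lemma eMap_Q {i : Bool} {good : IsGood ar s (D i)} {x : D i} (h : ¬ isP ar s x) :
    eMap (f := f) i good x = Sum.inr ⟨i, ⟨x, (good.part x).resolve_left h⟩⟩ := dif_neg h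

/-- The embedding of `D i` into the joint structure. -/
noncomputable def eEmb (i : Bool) (good : IsGood ar s (D i)) :
    D i ↪[LFull ar s] ECar ar s M₀ D f where
  toFun := eMap i good
  inj' := by
    intro x y hxy
    by_cases hx : isP ar s x <;> by_cases hy : isP ar s y
    · rw [eMap_P hx, eMap_P hy] at hxy
      injection hxy with hxy
      have := (f i).injective (Subtype.ext_iff.mp hxy)
      exact Subtype.ext_iff.mp this
    · rw [eMap_P hx, eMap_Q hy] at hxy; exact absurd hxy (fun h => nomatch h)
    · rw [eMap_Q hx, eMap_P hy] at hxy; exact absurd hxy (fun h => nomatch h)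
    · rw [eMap_Q hx, eMap_Q hy] at hxy
      injection hxy with hxy
      obtain ⟨-, h⟩ := Sigma.mk.inj_iff.mp hxy
      rw [heq_eq_eq] at h
      exact Subtype.ext_iff.mp h
  map_fun' := fun {n} F _ => isEmptyElim F
  map_rel' := by
    intro k r t
    show RelMap (L := LFull ar s) r (fun j => eMap (f := f) i good (t j)) ↔ RelMap r t
    rcases r with r | r
    · cases r
      -- case P
      · show (∃ p, eMap (f := f) i good (t 0) = Sum.inl p) ↔ _
        rw [show RelMap (L := LFull ar s) (Sum.inl LRel.P) t = isP ar s (t 0) by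
          unfold isP; congr 1; funext j; fin_cases j; rfl]
        by_cases h : isP ar s (t 0)
        · simp only [h, iff_true]
          exact ⟨_, eMap_P h⟩
        · simp only [h, iff_false]
          rintro ⟨p, hp⟩
          rw [eMap_Q h] at hp
          exact nomatch hp
      -- case Q
      · show (∃ p, eMap (f := f) i good (t 0) = Sum.inr p) ↔ _
        rw [show RelMap (L := LFull ar s) (Sum.inl LRel.Q) t = isQ ar s (t 0) by
          unfold isQ; congr 1; funext j; fin_cases j; rfl]
        by_cases h : isP ar s (t 0)
        · constructor
          · rintro ⟨p, hp⟩
            rw [eMap_P h] at hp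
            exact nomatch hp
          · intro hq
            exact absurd ⟨h, hq⟩ (good.not_both _)
        · exact ⟨fun _ => (good.part _).resolve_left h, fun _ => ⟨_, eMap_Q h⟩⟩
      -- case lam
      · show lamE (eMap (f := f) i good (t 0)) ↔ _
        rw [show RelMap (L := LFull ar s) (Sum.inl LRel.lam) t = isLam ar s (t 0) by
          unfold isLam; congr 1; funext j; fin_cases j; rfl]
        by_cases h : isP ar s (t 0)
        · rw [eMap_P h]
          constructor
          · rintro ⟨i', q, hq, -⟩
            exact nomatch hq
          · intro hl
            exact absurd ⟨h, good.lam_q _ hl⟩ (good.not_both _)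
        · rw [eMap_Q h, lamE_mk]
      -- case rho
      · show rhoE (eMap (f := f) i good (t 0)) ↔ _
        rw [show RelMap (L := LFull ar s) (Sum.inl LRel.rho) t = isRho ar s (t 0) by
          unfold isRho; congr 1; funext j; fin_cases j; rfl]
        by_cases h : isP ar s (t 0)
        · rw [eMap_P h]
          constructor
          · rintro ⟨i', q, hq, -⟩
            exact nomatch hq
          · intro hl
            exact absurd ⟨h, good.rho_q _ hl⟩ (good.not_both _)
        · rw [eMap_Q h, rhoE_mk]
      -- case H
      · show hE (eMap (f := f) i good (t 0)) (eMap (f := f) i good (t 1)) ↔ _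
        rw [show RelMap (L := LFull ar s) (Sum.inl LRel.H) t = isH ar s (t 0) (t 1) by
          unfold isH; congr 1; funext j; fin_cases j <;> rfl]
        by_cases h0 : isP ar s (t 0)
        · rw [eMap_P h0]
          constructor
          · rintro ⟨i', q, q', hq, -⟩
            exact nomatch hq
          · intro hh
            exact absurd ⟨h0, (good.h_q _ _ hh).1⟩ (good.not_both _)
        · by_cases h1 : isP ar s (t 1)
          · rw [eMap_P h1]
            constructor
            · rintro ⟨i', q, q', -, hq, -⟩
              exact nomatch hq
            · intro hh
              exact absurd ⟨h1, (good.h_q _ _ hh).2⟩ (good.not_both _)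
          · rw [eMap_Q h0, eMap_Q h1, hE_mk]
      -- case S
      · show sE (eMap (f := f) i good (t 0)) (eMap (f := f) i good (t 1))
            (eMap (f := f) i good (t 2)) (eMap (f := f) i good (t 3)) ↔ _
        rw [show RelMap (L := LFull ar s) (Sum.inl LRel.S) t
            = isS ar s (t 0) (t 1) (t 2) (t 3) by
          unfold isS; congr 1; funext j; fin_cases j <;> rfl]
        constructor
        · rintro ⟨i', u, u', q, q', p, p', h1, h2, h3, h4, h5, h6, h7⟩
          -- discover the shapes of t 0, t 1, t 2, t 3
          by_cases ha : isP ar s (t 0)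
          swap
          · rw [eMap_Q ha] at h1; exact absurd h1 (fun h => nomatch h)
          by_cases hb : isP ar s (t 1)
          · rw [eMap_P hb] at h3; exact absurd h3 (fun h => nomatch h)
          by_cases hc : isP ar s (t 2)
          swap
          · rw [eMap_Q hc] at h4; exact absurd h4 (fun h => nomatch h)
          by_cases hd : isP ar s (t 3)
          · rw [eMap_P hd] at h6; exact absurd h6 (fun h => nomatch h)
          rw [eMap_P ha] at h1
          rw [eMap_Q hb] at h3
          rw [eMap_P hc] at h4
          rw [eMap_Q hd] at h6
          injection h1 with h1
          injection h3 with h3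
          injection h4 with h4
          injection h6 with h6
          obtain ⟨rfl, h3⟩ := Sigma.mk.inj_iff.mp h3
          rw [heq_eq_eq] at h3
          obtain ⟨-, h6⟩ := Sigma.mk.inj_iff.mp h6
          rw [heq_eq_eq] at h6
          have h2' : f i ⟨t 0, ha⟩ = f i u := by
            rw [← h2]; exact congrArg Subtype.val h1
          have h5' : f i ⟨t 2, hc⟩ = f i u' := by
            rw [← h5]; exact congrArg Subtype.val h4
          have hu : (⟨t 0, ha⟩ : Ppart ar s (D i)) = u := (f i).injective h2'
          have hu' : (⟨t 2, hc⟩ : Ppart ar s (D i)) = u' := (f i).injective h5'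
          rw [← hu, ← hu', ← h3, ← h6] at h7
          exact h7
        · intro hs
          obtain ⟨ha, hb, hc, hd⟩ := good.s_pq _ _ _ _ hs
          have hb' : ¬ isP ar s (t 1) := fun h => absurd ⟨h, hb⟩ (good.not_both _)
          have hd' : ¬ isP ar s (t 3) := fun h => absurd ⟨h, hd⟩ (good.not_both _)
          rw [eMap_P ha, eMap_Q hb', eMap_P hc, eMap_Q hd']
          exact ⟨i, ⟨t 0, ha⟩, ⟨t 2, hc⟩, _, _, _, _, rfl, rfl, rfl, rfl, rfl, rfl, hs⟩
    -- case Sum.inr r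
    · rw [relE]
      constructor
      · rintro ⟨t', ht', hrel⟩
        have hP : ∀ j, isP ar s (t j) := by
          intro j
          by_contra h
          have := ht' j
          rw [eMap_Q h] at this
          exact absurd this (by simp [toM])
        have ht'' : ∀ j, t' j = f i ⟨t j, hP j⟩ := by
          intro j
          have := ht' j
          rw [eMap_P (hP j)] at this
          exact (Option.some.inj this).symm
        rw [funext ht''] at hrel
        have := ((f i).map_rel' r (fun j => ⟨t j, hP j⟩)).mp hrel
        exact this
      · intro hrel
        have hP : ∀ j, isP ar s (t j) := good.r_p k r t hrel
        refine ⟨fun j => f i ⟨t j, hP j⟩, fun j => by rw [eMap_P (hP j)]; rfl, ?_⟩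
        exact ((f i).map_rel' r (fun j => ⟨t j, hP j⟩)).mpr hrel

end Construction3
section Construction4

variable {ar : ℕ → ℕ} {s : Set ℕ} {M₀ : Type u} [(L0r ar s).Structure M₀]
variable {D : Bool → Type u} [inst : ∀ i, (LFull ar s).Structure (D i)]
variable {f : ∀ i, Ppart ar s (D i) ↪[L0r ar s] M₀}

lemma npairE
    (hK : ∀ (i : Bool) (n : ℕ) (h1 : 0 < n) (h2 : n ∈ s) (a : Fin (ar n) → D i)
      (c : Fin n → D i), IsNPair ar s n (ar n) a c →
        RelMap (L := LFull ar s) (Sum.inr (R ar s n h1 h2)) a)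
    (n : ℕ) (h1 : 0 < n) (h2 : n ∈ s)
    (a : Fin (ar n) → ECar ar s M₀ D f) (c : Fin n → ECar ar s M₀ D f)
    (hp : IsNPair ar s n (ar n) a c) :
    RelMap (L := LFull ar s) (Sum.inr (R ar s n h1 h2)) a := by
  choose y hy using fun j => (isQ_E (c j)).mp (hp.cQ j)
  -- all the `c j` live in the same component
  have step : ∀ i : Fin n, (y i).1 = (y ⟨((i : ℕ) + 1) % n, Nat.mod_lt _ h1⟩).1 := by
    intro i
    have hh := (hp.hH i ⟨((i : ℕ) + 1) % n, Nat.mod_lt _ h1⟩).mpr rfl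
    rw [isH_E] at hh
    obtain ⟨i', q, q', hx1, hx2, -⟩ := hh
    rw [hy i] at hx1
    rw [hy _] at hx2
    injection hx1 with hx1
    injection hx2 with hx2
    rw [hx1, hx2]
  have key : ∀ m : ℕ, (y ⟨m % n, Nat.mod_lt _ h1⟩).1 = (y ⟨0 % n, Nat.mod_lt _ h1⟩).1 := by
    intro m
    induction m with
    | zero => rfl
    | succ m ih =>
      have e1 : (⟨(m + 1) % n, Nat.mod_lt _ h1⟩ : Fin n)
          = ⟨(m % n + 1) % n, Nat.mod_lt _ h1⟩ := by
        apply Fin.ext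
        show (m + 1) % n = (m % n + 1) % n
        rw [Nat.mod_add_mod]
      rw [e1, ← step ⟨m % n, Nat.mod_lt _ h1⟩]
      exact ih
  have hside : ∀ j : Fin n, (y j).1 = (y ⟨0, h1⟩).1 := by
    intro j
    have e1 : j = ⟨(j : ℕ) % n, Nat.mod_lt _ h1⟩ := by
      apply Fin.ext
      exact (Nat.mod_eq_of_lt j.isLt).symm
    have e2 : (⟨0 % n, Nat.mod_lt _ h1⟩ : Fin n) = ⟨0, h1⟩ := by
      apply Fin.ext
      exact Nat.zero_mod n
    rw [e1, key, e2]
  -- extract the common component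
  have hc'' : ∀ j, ∃ q : Qpart ar s (D ((y ⟨0, h1⟩).1)),
      c j = (Sum.inr ⟨(y ⟨0, h1⟩).1, q⟩ : ECar ar s M₀ D f) := by
    intro j
    have hj := hside j
    rcases hYJ : y j with ⟨ij, qj⟩
    rw [hYJ] at hj
    dsimp only at hj
    subst hj
    exact ⟨qj, by rw [hy j, hYJ]⟩
  choose c' hc' using hc''
  -- extract the preimages of the `a i`
  have hA : ∀ i : Fin (ar n), ∃ (u : Ppart ar s (D ((y ⟨0, h1⟩).1)))
      (p : ↥(PEset ar s M₀ D f)), a i = (Sum.inl p : ECar ar s M₀ D f) ∧ p.val = f _ u := by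
    intro i
    have hs := (hp.hS i i ⟨0, h1⟩ ⟨0, h1⟩).mpr rfl
    rw [isS_E] at hs
    obtain ⟨i', u, u', q, q', p, p', hx1, hx2, hx3, -, -, -, -⟩ := hs
    rw [hc' ⟨0, h1⟩] at hx3
    injection hx3 with hx3
    obtain ⟨hi, -⟩ := Sigma.mk.inj_iff.mp hx3
    subst hi
    exact ⟨u, p, hx1, hx2⟩
  choose a' pa ha1 ha2 using hA
  -- the corresponding n-pair in `D i₀`
  have hpair : IsNPair ar s n (ar n) (fun i => ((a' i : D ((y ⟨0, h1⟩).1))))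
      (fun j => ((c' j : D ((y ⟨0, h1⟩).1)))) := by
    constructor
    · exact hp.le
    · exact fun i => (a' i).2
    · exact fun j => (c' j).2
    · intro j l h
      apply hp.inj
      rw [hc' j, hc' l, Subtype.ext h]
    · intro i j
      have h := hp.hH i j
      rw [isH_E, hc' i, hc' j, hE_mk] at h
      exact h
    · intro i
      have h := hp.hlam i
      rw [isLam_E, hc' i, lamE_mk] at h
      exact h
    · intro i
      have h := hp.hrho i
      rw [isRho_E, hc' i, rhoE_mk] at h
      exact h
    · intro i k j l
      have h := hp.hS i k j l
      rw [isS_E, ha1 i, ha1 k, hc' j, hc' l,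
        sE_mk (a' i) (a' k) (c' j) (c' l) (pa i) (pa k) (ha2 i) (ha2 k)] at h
      constructor
      · intro hs
        have h' := h.mp hs
        injection h' with h'
        have : f _ (a' i) = f _ (a' k) := by rw [← ha2 i, ← ha2 k, h']
        exact congrArg Subtype.val ((f _).injective this)
      · intro he
        apply h.mpr
        have : pa i = pa k := by
          apply Subtype.ext
          rw [ha2 i, ha2 k, Subtype.ext he]
        rw [this]
  have hrel := hK _ n h1 h2 _ _ hpair
  rw [relE]
  refine ⟨fun i => f _ (a' i), fun i => ?_, ?_⟩
  · rw [ha1 i]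
    show some (pa i).val = _
    rw [ha2 i]
  · exact ((f _).map_rel' _ a').mpr hrel

end Construction4
/-- The class `K` has the joint embedding property. -/
theorem statement_2
    (ar : ℕ → ℕ)
    (har_le : ∀ n : ℕ, 0 < n → ar n ≤ n)
    (har_mono : ∀ m n : ℕ, 0 < m → m ≤ n → ar m ≤ ar n)
    (M₀ : Type u) [(L0r ar Set.univ).Structure M₀] [Countable M₀] [Infinite M₀]
    (hcat : Cardinal.Categorical (ℵ₀ : Cardinal.{u}) ((L0r ar Set.univ).completeTheory M₀))
    (hqe : ∀ (k : ℕ) (φ : (L0r ar Set.univ).Formula (Fin k)),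
      ∃ ψ : (L0r ar Set.univ).Formula (Fin k), ψ.IsQF ∧
        ∀ a : Fin k → M₀, φ.Realize a ↔ ψ.Realize a)
    (hcomplete : ∀ (n : ℕ) (h1 : 0 < n) (a b : Fin (ar n) → M₀),
      RelMap (R ar Set.univ n h1 (Set.mem_univ n)) a →
        RelMap (R ar Set.univ n h1 (Set.mem_univ n)) b →
        ∀ φ : (L0r ar Set.univ).Formula (Fin (ar n)), φ.Realize a ↔ φ.Realize b) :
    JointEmbedding (Kclass ar Set.univ M₀) := by
  rintro D₁ hD₁ D₂ hD₂
  obtain ⟨hfin₁, hgood₁, ⟨f₁⟩, hK₁⟩ := hD₁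
  obtain ⟨hfin₂, hgood₂, ⟨f₂⟩, hK₂⟩ := hD₂
  let Db : Bool → Bundled (LFull ar Set.univ).Structure := fun b => cond b D₂ D₁
  let Dt : Bool → Type u := fun b => (Db b).α
  letI instD : ∀ b, (LFull ar Set.univ).Structure (Dt b) := fun b => (Db b).str
  let fB : ∀ b, Ppart ar Set.univ (Dt b) ↪[L0r ar Set.univ] M₀ := fun b =>
    match b with
    | false => f₁
    | true => f₂
  have goodB : ∀ b, IsGood ar Set.univ (Dt b) := fun b =>
    match b with
    | false => hgood₁
    | true => hgood₂
  have finB : ∀ b, Finite (Dt b) := fun b =>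
    match b with
    | false => hfin₁
    | true => hfin₂
  have hKB : ∀ (b : Bool) (n : ℕ) (h1 : 0 < n) (h2 : n ∈ Set.univ)
      (a : Fin (ar n) → Dt b) (c : Fin n → Dt b),
      IsNPair ar Set.univ n (ar n) a c →
        RelMap (L := LFull ar Set.univ) (Sum.inr (R ar Set.univ n h1 h2)) a := fun b =>
    match b with
    | false => hK₁
    | true => hK₂
  refine ⟨⟨ECar ar Set.univ M₀ Dt fB, inferInstance⟩,
    ⟨?_, ?_, ⟨pEmb⟩, ?_⟩, ⟨eEmb false (goodB false)⟩, ⟨eEmb true (goodB true)⟩⟩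
  · exact finiteE
  · exact goodE
  · exact fun n h1 h2 a c hp => npairE hKB n h1 h2 a c hp

end Ivanov
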